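/- Let d ≥ 2, let L be a convex body in ℝ^d, let ξ ∈ S^{d-1}, and let t ∈ ℝ satisfy min_{x ∈ L} ⟨x, ξ⟩ < t < max_{x ∈ L} ⟨x, ξ⟩. Then lim_{ε→0⁺} (ε/2) ∫_{L} |⟨x, ξ⟩ − t|^{−1+ε} dx = V_{d-1}(L ∩ {x ∈ ℝ^d : ⟨x, ξ⟩ = t}), where the integral is with respect to d-dimensional Lebesgue measure and V_{d-1} denotes (d-1)-dimensional Lebesgue measure on the hyperplane {⟨x, ξ⟩ = t}. -/

import Mathlib

open MeasureTheory Metric Set Filter intervalIntegral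
open scoped RealInnerProductSpace ENNReal Pointwise

noncomputable section

abbrev Euc (d : ℕ) := EuclideanSpace ℝ (Fin d)

lemma measurable_abs_rpow (c t : ℝ) : Measurable fun s : ℝ => |s - t| ^ c := by
  have heq : (fun s : ℝ => |s - t| ^ c)
      = fun s => if s = t then (if c = 0 then 1 else 0)
        else Real.exp (Real.log |s - t| * c) := by
    funext s
    by_cases hs : s = t
    · subst hs
      rw [sub_self, abs_zero, if_pos rfl]
      by_cases hc : c = 0
      · rw [if_pos hc, hc, Real.rpow_zero]
      · rw [if_neg hc, Real.zero_rpow hc]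
    · have h0 : 0 < |s - t| := abs_pos.mpr (sub_ne_zero.mpr hs)
      rw [Real.rpow_def_of_pos h0, if_neg hs]
  rw [heq]
  refine Measurable.ite ?_ measurable_const ?_
  · simpa [Set.setOf_eq_eq_singleton] using measurableSet_singleton t
  · exact Real.measurable_exp.comp
      ((Real.measurable_log.comp (measurable_id.sub measurable_const).abs).mul measurable_const)

lemma aux_finrank (k : ℕ) (ξ : Euc (k+1)) (hξ : ‖ξ‖ = 1) :
    Module.finrank ℝ ((ℝ ∙ ξ)ᗮ : Submodule ℝ (Euc (k+1))) = k := by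
  have hξ0 : ξ ≠ 0 := by intro h; rw [h, norm_zero] at hξ; norm_num at hξ
  have h1 := Submodule.finrank_add_finrank_orthogonal (K := (ℝ ∙ ξ : Submodule ℝ (Euc (k+1))))
  rw [finrank_span_singleton hξ0] at h1
  have h2 : Module.finrank ℝ (Euc (k+1)) = k + 1 := finrank_euclideanSpace_fin
  omega

lemma measurePreserving_decomp (k : ℕ) (ξ : Euc (k+1)) (hξ : ‖ξ‖ = 1) :
    MeasurePreserving (fun p : ℝ × (ℝ ∙ ξ)ᗮ => p.1 • ξ + (p.2 : Euc (k+1)))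
      (volume.prod volume) volume := by
  have hξ0 : ξ ≠ 0 := by intro h; rw [h, norm_zero] at hξ; norm_num at hξ
  set F : Submodule ℝ (Euc (k+1)) := (ℝ ∙ ξ)ᗮ with hF
  have hrank : Module.finrank ℝ F = k := aux_finrank k ξ hξ
  let bF : OrthonormalBasis (Fin k) ℝ F :=
    (stdOrthonormalBasis ℝ F).reindex (finCongr hrank)
  let v : Fin (k+1) → Euc (k+1) := Fin.cons ξ (fun i => (bF i : Euc (k+1)))
  have hinner : ∀ i, ⟪ξ, (bF i : Euc (k+1))⟫ = 0 := by
    intro i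
    have := (bF i).2
    rw [Submodule.mem_orthogonal] at this
    exact this ξ (Submodule.mem_span_singleton_self ξ)
  have hv : Orthonormal ℝ v := by
    constructor
    · intro i
      refine Fin.cases ?_ ?_ i
      · simpa [v] using hξ
      · intro j; simp only [v, Fin.cons_succ]; exact bF.orthonormal.1 j
    · intro i j hij
      induction i using Fin.cases with
      | zero =>
        induction j using Fin.cases with
        | zero => exact absurd rfl hij
        | succ j' => simpa [v] using hinner j'
      | succ i' =>
        induction j using Fin.cases with
        | zero =>
          simp only [v, Fin.cons_succ, Fin.cons_zero]
          rw [real_inner_comm]; exact hinner i'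
        | succ j' =>
          have hij' : i' ≠ j' := fun h => hij (congrArg Fin.succ h)
          simpa [v, Submodule.coe_inner] using bF.orthonormal.2 hij'
  have hcard : Fintype.card (Fin (k+1)) = Module.finrank ℝ (Euc (k+1)) := by
    simp [finrank_euclideanSpace_fin]
  have hspan : ⊤ ≤ Submodule.span ℝ (Set.range v) := by
    rw [← (basisOfLinearIndependentOfCardEqFinrank hv.linearIndependent hcard).span_eq,
      coe_basisOfLinearIndependentOfCardEqFinrank]
  let B : OrthonormalBasis (Fin (k+1)) ℝ (Euc (k+1)) := OrthonormalBasis.mk hv hspan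
  have h1 : MeasurePreserving
      (Prod.map (id : ℝ → ℝ) (fun y : F => (WithLp.equiv 2 (Fin k → ℝ)) (bF.repr y)))
      (volume.prod volume) (volume.prod volume) :=
    (MeasurePreserving.id volume).prod
      ((PiLp.volume_preserving_ofLp (Fin k)).comp bF.measurePreserving_repr)
  have h2 := (volume_preserving_piFinSuccAbove (fun _ : Fin (k+1) => ℝ) 0).symm
  have h3 : MeasurePreserving (WithLp.equiv 2 (Fin (k+1) → ℝ)).symm volume volume :=
    PiLp.volume_preserving_toLp (Fin (k+1))
  have h4 := B.measurePreserving_repr_symm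
  have hcomp := h4.comp (h3.comp (h2.comp h1))
  convert hcomp using 1
  funext p
  show p.1 • ξ + (p.2 : Euc (k+1)) = B.repr.symm _
  have hB : ∀ i, B i = v i := fun i => congrFun (OrthonormalBasis.coe_mk hv hspan) i
  rw [← B.sum_repr_symm]
  have hx : ∀ i, ((WithLp.equiv 2 (Fin (k+1) → ℝ)).symm
      ((MeasurableEquiv.piFinSuccAbove (fun _ : Fin (k+1) => ℝ) 0).symm
        (Prod.map id (fun y : F => (WithLp.equiv 2 (Fin k → ℝ)) (bF.repr y)) p))) i
      = (Fin.cons p.1 (fun j => bF.repr p.2 j) : Fin (k+1) → ℝ) i := by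
    intro i
    show (MeasurableEquiv.piFinSuccAbove (fun _ : Fin (k+1) => ℝ) 0).symm _ i = _
    show (Fin.insertNthEquiv (fun _ : Fin (k+1) => ℝ) 0) _ i = _
    rw [Fin.insertNthEquiv_apply]
    rw [Fin.insertNth_zero']
    rfl
  calc p.1 • ξ + (p.2 : Euc (k+1))
      = ∑ i, (Fin.cons p.1 (fun j => bF.repr p.2 j) : Fin (k+1) → ℝ) i • v i := by
        rw [Fin.sum_univ_succ]
        simp only [Fin.cons_zero, Fin.cons_succ, v]
        congr 1
        have : ∑ i, bF.repr p.2 i • (bF i : Euc (k+1))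
            = ((∑ i, bF.repr p.2 i • bF i : F) : Euc (k+1)) := by
          push_cast; rfl
        rw [this, bF.sum_repr p.2]
    _ = ∑ i, _ • B i := by
        refine Finset.sum_congr rfl fun i _ => ?_
        rw [hB]
        simp only [Function.comp_apply]
        rw [hx]



lemma proj_decomp (k : ℕ) (ξ : Euc (k+1)) (hξ : ‖ξ‖ = 1) (s : ℝ) (y : (ℝ ∙ ξ)ᗮ) :
    ⟪s • ξ + (y : Euc (k+1)), ξ⟫ = s := by
  have hy : ⟪(y : Euc (k+1)), ξ⟫ = 0 := by
    rw [real_inner_comm]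
    exact y.2 ξ (Submodule.mem_span_singleton_self ξ)
  rw [inner_add_left, real_inner_smul_left, hy, real_inner_self_eq_norm_sq, hξ]
  ring

lemma lintegral_slice (k : ℕ) (ξ : Euc (k+1)) (hξ : ‖ξ‖ = 1)
    (L : Set (Euc (k+1))) (hLm : MeasurableSet L) (h : ℝ → ℝ≥0∞) (hh : Measurable h) :
    ∫⁻ x in L, h ⟪x, ξ⟫ =
      ∫⁻ s, h s * volume {y : (ℝ ∙ ξ)ᗮ | s • ξ + (y : Euc (k+1)) ∈ L} := by
  set φ : ℝ × (ℝ ∙ ξ)ᗮ → Euc (k+1) := fun p => p.1 • ξ + (p.2 : Euc (k+1)) with hφdef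
  have hφ := measurePreserving_decomp k ξ hξ
  set S : Set (ℝ × (ℝ ∙ ξ)ᗮ) := φ ⁻¹' L with hSdef
  have hS : MeasurableSet S := hφ.measurable hLm
  have hmeas1 : Measurable fun x : Euc (k+1) => h ⟪x, ξ⟫ :=
    hh.comp ((continuous_id.inner continuous_const).measurable)
  calc ∫⁻ x in L, h ⟪x, ξ⟫
      = ∫⁻ x, L.indicator (fun x => h ⟪x, ξ⟫) x := (lintegral_indicator hLm _).symm
    _ = ∫⁻ p, L.indicator (fun x => h ⟪x, ξ⟫) (φ p) ∂(volume.prod volume) :=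
        (hφ.lintegral_comp (hmeas1.indicator hLm)).symm
    _ = ∫⁻ p, S.indicator (fun p : ℝ × (ℝ ∙ ξ)ᗮ => h p.1) p ∂(volume.prod volume) := by
        refine lintegral_congr fun p => ?_
        by_cases hp : p ∈ S
        · rw [Set.indicator_of_mem hp, Set.indicator_of_mem (by exact hp)]
          rw [proj_decomp k ξ hξ]
        · rw [Set.indicator_of_notMem hp, Set.indicator_of_notMem (by exact hp)]
    _ = ∫⁻ s, ∫⁻ y, S.indicator (fun p : ℝ × (ℝ ∙ ξ)ᗮ => h p.1) (s, y) := by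
        exact lintegral_prod _ ((measurable_fst.comp measurable_id |> hh.comp |>.indicator hS).aemeasurable)
    _ = ∫⁻ s, h s * volume {y : (ℝ ∙ ξ)ᗮ | s • ξ + (y : Euc (k+1)) ∈ L} := by
        refine lintegral_congr fun s => ?_
        have : ∀ y : (ℝ ∙ ξ)ᗮ, S.indicator (fun p : ℝ × (ℝ ∙ ξ)ᗮ => h p.1) (s, y)
            = h s * (Prod.mk s ⁻¹' S).indicator 1 y := by
          intro y
          by_cases hy : (s, y) ∈ S
          · rw [Set.indicator_of_mem hy, Set.indicator_of_mem (by exact hy)]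
            simp
          · rw [Set.indicator_of_notMem hy, Set.indicator_of_notMem (by exact hy)]
            simp
        rw [lintegral_congr this, lintegral_const_mul _ ((measurable_one).indicator
          (measurable_prodMk_left hS))]
        congr 1
        rw [lintegral_indicator_one (measurable_prodMk_left hS)]
        rfl

lemma measurable_secvol (k : ℕ) (ξ : Euc (k+1)) (hξ : ‖ξ‖ = 1)
    (L : Set (Euc (k+1))) (hLm : MeasurableSet L) :
    Measurable (fun s : ℝ => volume {y : (ℝ ∙ ξ)ᗮ | s • ξ + (y : Euc (k+1)) ∈ L}) := by
  have hφ := measurePreserving_decomp k ξ hξ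
  exact measurable_measure_prodMk_left (hφ.measurable hLm)



set_option synthInstance.maxHeartbeats 1000000 in
lemma section_scaling (k : ℕ) (ξ : Euc (k+1)) (hξ : ‖ξ‖ = 1)
    (L : Set (Euc (k+1))) (hLc : Convex ℝ L)
    (s1 s3 lam : ℝ) (h0 : 0 ≤ lam) (h1 : lam ≤ 1)
    (z : (ℝ ∙ ξ)ᗮ) (hz : s1 • ξ + (z : Euc (k+1)) ∈ L) :
    ENNReal.ofReal (lam ^ k) * volume {y : (ℝ ∙ ξ)ᗮ | s3 • ξ + (y : Euc (k+1)) ∈ L}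
      ≤ volume {y : (ℝ ∙ ξ)ᗮ | ((1-lam) * s1 + lam * s3) • ξ + (y : Euc (k+1)) ∈ L} := by
  set K3 := {y : (ℝ ∙ ξ)ᗮ | s3 • ξ + (y : Euc (k+1)) ∈ L}
  set K2 := {y : (ℝ ∙ ξ)ᗮ | ((1-lam) * s1 + lam * s3) • ξ + (y : Euc (k+1)) ∈ L}
  have hsub : ((1-lam) • z) +ᵥ (lam • K3) ⊆ K2 := by
    rintro w ⟨w', ⟨y, hy, rfl⟩, rfl⟩
    show ((1-lam) * s1 + lam * s3) • ξ + (((1-lam) • z + lam • y : (ℝ ∙ ξ)ᗮ) : Euc (k+1)) ∈ L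
    have hmem := hLc hz hy (by linarith : (0:ℝ) ≤ 1 - lam) h0 (by ring)
    convert hmem using 1
    push_cast
    module
  calc ENNReal.ofReal (lam ^ k) * volume K3
      = volume (((1-lam) • z) +ᵥ (lam • K3)) := by
        rw [measure_vadd]
        rw [Measure.addHaar_smul volume]
        rw [aux_finrank k ξ hξ]
        rw [abs_of_nonneg (pow_nonneg h0 k)]
    _ ≤ volume K2 := measure_mono hsub

lemma secvol_continuousAt (k : ℕ) (ξ : Euc (k+1)) (hξ : ‖ξ‖ = 1)
    (L : Set (Euc (k+1))) (hLc : Convex ℝ L)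
    (Mv : ℝ≥0∞) (hMv : Mv ≠ ⊤)
    (hbound : ∀ s : ℝ, volume {y : (ℝ ∙ ξ)ᗮ | s • ξ + (y : Euc (k+1)) ∈ L} ≤ Mv)
    (t : ℝ) (p q : Euc (k+1)) (hp : p ∈ L) (hq : q ∈ L)
    (hpt : ⟪p, ξ⟫ < t) (hqt : t < ⟪q, ξ⟫) :
    ContinuousAt (fun s : ℝ =>
      (volume {y : (ℝ ∙ ξ)ᗮ | s • ξ + (y : Euc (k+1)) ∈ L}).toReal) t := by
  set f : ℝ → ℝ≥0∞ := fun s => volume {y : (ℝ ∙ ξ)ᗮ | s • ξ + (y : Euc (k+1)) ∈ L} with hf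
  set g : ℝ → ℝ := fun s => (f s).toReal with hg
  have hfne : ∀ s, f s ≠ ⊤ := fun s => ne_top_of_le_ne_top hMv (hbound s)
  have hg0 : ∀ s, 0 ≤ g s := fun s => ENNReal.toReal_nonneg
  set α := ⟪p, ξ⟫ with hα
  set β := ⟪q, ξ⟫ with hβ
  -- the horizontal components of p and q
  have hmemF : ∀ x : Euc (k+1), x ∈ L → (x - ⟪x, ξ⟫ • ξ) ∈ (ℝ ∙ ξ)ᗮ := by
    intro x hx
    rw [Submodule.mem_orthogonal]
    intro u hu
    rw [Submodule.mem_span_singleton] at hu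
    obtain ⟨c, rfl⟩ := hu
    rw [inner_sub_right, real_inner_smul_left, real_inner_smul_left, real_inner_smul_right,
      real_inner_self_eq_norm_sq, hξ, real_inner_comm ξ x]
    ring
  have hzsec : ∀ (x : Euc (k+1)) (hx : x ∈ L),
      ⟪x, ξ⟫ • ξ + ((⟨x - ⟪x, ξ⟫ • ξ, hmemF x hx⟩ : (ℝ ∙ ξ)ᗮ) : Euc (k+1)) ∈ L := by
    intro x hx
    simpa using hx
  -- real-valued scaling inequality
  have hreal : ∀ (s1 s3 lam : ℝ), 0 ≤ lam → lam ≤ 1 → ∀ z : (ℝ ∙ ξ)ᗮ,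
      s1 • ξ + (z : Euc (k+1)) ∈ L → lam ^ k * g s3 ≤ g ((1-lam) * s1 + lam * s3) := by
    intro s1 s3 lam hl0 hl1 z hz
    have := section_scaling k ξ hξ L hLc s1 s3 lam hl0 hl1 z hz
    have h2 := ENNReal.toReal_mono (hfne _) this
    rw [ENNReal.toReal_mul, ENNReal.toReal_ofReal (pow_nonneg hl0 k)] at h2
    exact h2
  have hα0 : (0:ℝ) < t - α := by linarith
  have hβ0 : (0:ℝ) < β - t := by linarith
  set lo : ℝ → ℝ := fun s => (min ((β - s)/(β - t)) ((s - α)/(t - α)))^k * g t with hlo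
  set hi : ℝ → ℝ := fun s => g t / (min ((t - α)/(s - α)) ((β - t)/(β - s)))^k with hhi
  have hlot : Tendsto lo (nhds t) (nhds (g t)) := by
    have : ContinuousAt lo t := by
      apply ContinuousAt.mul _ continuousAt_const
      exact (((continuousAt_const.sub continuousAt_id).div continuousAt_const hβ0.ne').min
        ((continuousAt_id.sub continuousAt_const).div continuousAt_const hα0.ne')).pow k
    have hval : lo t = g t := by
      simp only [hlo]
      rw [div_self hβ0.ne', div_self hα0.ne', min_self, one_pow, one_mul]
    rw [← hval]
    exact this
  have hhit : Tendsto hi (nhds t) (nhds (g t)) := by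
    have : ContinuousAt hi t := by
      refine ContinuousAt.div continuousAt_const (ContinuousAt.pow ?_ k) ?_
      · exact (continuousAt_const.div (continuousAt_id.sub continuousAt_const) hα0.ne').min
          (continuousAt_const.div (continuousAt_const.sub continuousAt_id) hβ0.ne')
      · rw [div_self hα0.ne', div_self hβ0.ne', min_self, one_pow]
        norm_num
    have hval : hi t = g t := by
      simp only [hhi]
      rw [div_self hα0.ne', div_self hβ0.ne', min_self, one_pow, div_one]
    rw [← hval]
    exact this
  have hnhds : Set.Ioo α β ∈ nhds t := isOpen_Ioo.mem_nhds ⟨hpt, hqt⟩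
  have hlower : ∀ᶠ s in nhds t, lo s ≤ g s := by
    filter_upwards [hnhds] with s hs
    obtain ⟨hsα, hsβ⟩ := hs
    have hmin0 : 0 ≤ min ((β - s)/(β - t)) ((s - α)/(t - α)) :=
      le_min (div_nonneg (by linarith) hβ0.le) (div_nonneg (by linarith) hα0.le)
    rcases le_or_gt t s with hts | hst
    · set lam := (β - s)/(β - t) with hlam
      have hl0 : 0 ≤ lam := div_nonneg (by linarith) hβ0.le
      have hl1 : lam ≤ 1 := by rw [div_le_one hβ0]; linarith
      have hseq : (1-lam) * β + lam * t = s := by rw [hlam]; field_simp; ring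
      have := hreal β t lam hl0 hl1 _ (hzsec q hq)
      rw [hseq] at this
      calc lo s ≤ lam ^ k * g t := by
            apply mul_le_mul_of_nonneg_right _ (hg0 t)
            exact pow_le_pow_left₀ hmin0 (min_le_left _ _) k
        _ ≤ g s := this
    · set lam := (s - α)/(t - α) with hlam
      have hl0 : 0 ≤ lam := div_nonneg (by linarith) hα0.le
      have hl1 : lam ≤ 1 := by rw [div_le_one hα0]; linarith
      have hseq : (1-lam) * α + lam * t = s := by rw [hlam]; field_simp; ring
      have := hreal α t lam hl0 hl1 _ (hzsec p hp)
      rw [hseq] at this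
      calc lo s ≤ lam ^ k * g t := by
            apply mul_le_mul_of_nonneg_right _ (hg0 t)
            exact pow_le_pow_left₀ hmin0 (min_le_right _ _) k
        _ ≤ g s := this
  have hupper : ∀ᶠ s in nhds t, g s ≤ hi s := by
    filter_upwards [hnhds] with s hs
    obtain ⟨hsα, hsβ⟩ := hs
    have hsα0 : (0:ℝ) < s - α := by linarith
    have hsβ0 : (0:ℝ) < β - s := by linarith
    have hmin0 : 0 < min ((t - α)/(s - α)) ((β - t)/(β - s)) :=
      lt_min (div_pos hα0 hsα0) (div_pos hβ0 hsβ0)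
    rcases le_or_gt t s with hts | hst
    · set mu := (t - α)/(s - α) with hmu
      have hm0 : 0 < mu := div_pos hα0 hsα0
      have hm1 : mu ≤ 1 := by rw [div_le_one hsα0]; linarith
      have hseq : (1-mu) * α + mu * s = t := by rw [hmu]; field_simp; ring
      have := hreal α s mu hm0.le hm1 _ (hzsec p hp)
      rw [hseq] at this
      have h1 : g s ≤ g t / mu ^ k := by
        rw [le_div_iff₀ (pow_pos hm0 k)]
        linarith [this]
      calc g s ≤ g t / mu ^ k := h1
        _ ≤ hi s := by
          apply div_le_div_of_nonneg_left (hg0 t) (pow_pos hmin0 k)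
          exact pow_le_pow_left₀ hmin0.le (min_le_left _ _) k
    · set mu := (β - t)/(β - s) with hmu
      have hm0 : 0 < mu := div_pos hβ0 hsβ0
      have hm1 : mu ≤ 1 := by rw [div_le_one hsβ0]; linarith
      have hseq : (1-mu) * β + mu * s = t := by rw [hmu]; field_simp; ring
      have := hreal β s mu hm0.le hm1 _ (hzsec q hq)
      rw [hseq] at this
      have h1 : g s ≤ g t / mu ^ k := by
        rw [le_div_iff₀ (pow_pos hm0 k)]
        linarith [this]
      calc g s ≤ g t / mu ^ k := h1
        _ ≤ hi s := by
          apply div_le_div_of_nonneg_left (hg0 t) (pow_pos hmin0 k)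
          exact pow_le_pow_left₀ hmin0.le (min_le_right _ _) k
  exact tendsto_of_tendsto_of_tendsto_of_le_of_le' hlot hhit hlower hupper


lemma kernel_half_int (r ε : ℝ) (hr : 0 < r) (hε : 0 < ε) :
    IntervalIntegrable (fun x : ℝ => |x| ^ (-1 + ε)) volume 0 r ∧
    ∫ x in (0:ℝ)..r, |x| ^ (-1 + ε) = r ^ ε / ε := by
  have hp : (-1:ℝ) < -1 + ε := by linarith
  have hbase : IntervalIntegrable (fun x : ℝ => x ^ (-1 + ε)) volume 0 r :=
    intervalIntegral.intervalIntegrable_rpow' hp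
  have heq : Set.EqOn (fun x : ℝ => |x| ^ (-1 + ε)) (fun x : ℝ => x ^ (-1 + ε))
      (Set.uIcc 0 r) := by
    intro x hx
    rw [Set.uIcc_of_le hr.le] at hx
    simp only
    rw [abs_of_nonneg hx.1]
  constructor
  · rw [intervalIntegrable_iff] at hbase ⊢
    exact hbase.congr_fun (fun x hx => (heq (Set.uIoc_subset_uIcc hx)).symm) measurableSet_uIoc
  · rw [intervalIntegral.integral_congr heq, integral_rpow (Or.inl hp)]
    rw [Real.zero_rpow (by linarith : -1 + ε + 1 ≠ 0)]
    have hpe : -1 + ε + 1 = ε := by ring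
    rw [hpe]
    ring

lemma kernel_int (t r ε : ℝ) (hr : 0 < r) (hε : 0 < ε) :
    IntegrableOn (fun s : ℝ => |s - t| ^ (-1 + ε)) (Set.Icc (t - r) (t + r)) volume ∧
    ∫ s in Set.Icc (t - r) (t + r), |s - t| ^ (-1 + ε) = 2 * r ^ ε / ε := by
  have h0r := kernel_half_int r ε hr hε
  -- integrable and value on [-r, 0] for |x|^p
  have hneg : IntervalIntegrable (fun x : ℝ => |x| ^ (-1 + ε)) volume (-r) 0 ∧
      ∫ x in (-r)..(0:ℝ), |x| ^ (-1 + ε) = r ^ ε / ε := by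
    have hcomp : (fun x : ℝ => |x| ^ (-1 + ε)) = (fun x : ℝ => |(-x)| ^ (-1 + ε)) := by
      funext x; rw [abs_neg]
    constructor
    · have := h0r.1.symm  -- r..0
      have h2 := (IntervalIntegrable.iff_comp_neg (f := fun x : ℝ => |x| ^ (-1 + ε)) enorm_ne_top).mp h0r.1
      rw [← hcomp] at h2
      simpa using h2.symm
    · have := intervalIntegral.integral_comp_neg (a := -r) (b := 0)
        (fun x : ℝ => |x| ^ (-1 + ε))
      rw [hcomp]
      rw [this]
      simp only [neg_neg, neg_zero]
      exact h0r.2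
  -- transfer to s ↦ |s - t|^p on [t-r, t+r]
  have hleft : IntervalIntegrable (fun s : ℝ => |s - t| ^ (-1 + ε)) volume (t - r) t := by
    have := hneg.1.comp_sub_right t
    simpa [sub_eq_add_neg, add_comm] using this
  have hright : IntervalIntegrable (fun s : ℝ => |s - t| ^ (-1 + ε)) volume t (t + r) := by
    have := h0r.1.comp_sub_right t
    simpa [add_comm] using this
  have hvleft : ∫ s in (t - r)..t, |s - t| ^ (-1 + ε) = r ^ ε / ε := by
    have := intervalIntegral.integral_comp_sub_right (a := t - r) (b := t)
      (fun x : ℝ => |x| ^ (-1 + ε)) t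
    rw [this]
    simpa using hneg.2
  have hvright : ∫ s in t..(t + r), |s - t| ^ (-1 + ε) = r ^ ε / ε := by
    have := intervalIntegral.integral_comp_sub_right (a := t) (b := t + r)
      (fun x : ℝ => |x| ^ (-1 + ε)) t
    rw [this]
    simpa using h0r.2
  have hii : IntervalIntegrable (fun s : ℝ => |s - t| ^ (-1 + ε)) volume (t - r) (t + r) :=
    hleft.trans hright
  constructor
  · rw [integrableOn_Icc_iff_integrableOn_Ioc]
    rw [intervalIntegrable_iff] at hii
    simpa [Set.uIoc_of_le (by linarith : t - r ≤ t + r)] using hii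
  · rw [MeasureTheory.integral_Icc_eq_integral_Ioc,
      ← intervalIntegral.integral_of_le (by linarith : t - r ≤ t + r),
      ← intervalIntegral.integral_add_adjacent_intervals hleft hright, hvleft, hvright]
    ring

lemma delta_approx (t R M : ℝ) (hR : 0 < R) (hM : 0 ≤ M) (g : ℝ → ℝ) (hmeas : Measurable g)
    (hg0 : ∀ s, 0 ≤ g s) (hgM : ∀ s, g s ≤ M)
    (hsupp : ∀ s, R < |s - t| → g s = 0)
    (hcont : ContinuousAt g t) :
    Tendsto (fun ε : ℝ => ε / 2 * ∫ s, g s * |s - t| ^ (-1 + ε))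
      (nhdsWithin 0 (Set.Ioi 0)) (nhds (g t)) := by
  rw [Metric.tendsto_nhds]
  intro ρ hρ
  set η := ρ / 4 with hη
  have hη0 : 0 < η := by positivity
  obtain ⟨δ0, hδ00, hδ0⟩ := Metric.continuousAt_iff.mp hcont η hη0
  set δ := min (δ0 / 2) R with hδdef
  have hδpos : 0 < δ := lt_min (by linarith) hR
  have hδR : δ ≤ R := min_le_right _ _
  have hδball : ∀ s : ℝ, s ∈ Set.Icc (t - δ) (t + δ) → |g s - g t| < η := by
    intro s hs
    have h1 : dist s t < δ0 := by
      rw [Real.dist_eq]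
      have : |s - t| ≤ δ := abs_le.mpr ⟨by linarith [hs.1], by linarith [hs.2]⟩
      calc |s - t| ≤ δ := this
        _ ≤ δ0 / 2 := min_le_left _ _
        _ < δ0 := by linarith
    have := hδ0 h1
    rwa [Real.dist_eq] at this
  have hbound : ∀ ε : ℝ, 0 < ε →
      (g t - η) * δ ^ ε ≤ ε / 2 * ∫ s, g s * |s - t| ^ (-1 + ε) ∧
      ε / 2 * (∫ s, g s * |s - t| ^ (-1 + ε)) ≤ (g t + η) * δ ^ ε + M * (R ^ ε - δ ^ ε) := by
    intro ε hε
    set K : ℝ → ℝ := fun s => |s - t| ^ (-1 + ε) with hK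
    have hK0 : ∀ s, 0 ≤ K s := fun s => Real.rpow_nonneg (abs_nonneg _) _
    have hKR := kernel_int t R ε hR hε
    have hKδ := kernel_int t δ ε hδpos hε
    have hgbdd : ∃ C, ∀ s : ℝ, ‖g s‖ ≤ C :=
      ⟨M, fun s => by rw [Real.norm_eq_abs, abs_of_nonneg (hg0 s)]; exact hgM s⟩
    have hGR : IntegrableOn (fun s => g s * K s) (Set.Icc (t - R) (t + R)) volume :=
      hKR.1.bdd_mul hmeas.aestronglyMeasurable (ae_of_all _ hgbdd.choose_spec)
    have hGδ : IntegrableOn (fun s => g s * K s) (Set.Icc (t - δ) (t + δ)) volume :=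
      hKδ.1.bdd_mul hmeas.aestronglyMeasurable (ae_of_all _ hgbdd.choose_spec)
    have hsubset : Set.Icc (t - δ) (t + δ) ⊆ Set.Icc (t - R) (t + R) :=
      Set.Icc_subset_Icc (by linarith) (by linarith)
    have htotal : (∫ s, g s * K s) = ∫ s in Set.Icc (t - R) (t + R), g s * K s := by
      refine (setIntegral_eq_integral_of_forall_compl_eq_zero fun s hs => ?_).symm
      have : R < |s - t| := by
        rcases not_and_or.mp (Set.mem_Icc.not.mp hs) with h | h
        · rw [abs_sub_comm, abs_of_pos (by push_neg at h; linarith)]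
          push_neg at h; linarith
        · rw [abs_of_pos (by push_neg at h; linarith)]
          push_neg at h; linarith
      rw [hsupp s this, zero_mul]
    -- lower bound
    have hlow : (g t - η) * (2 * δ ^ ε / ε) ≤ ∫ s, g s * K s := by
      have e1 : ∫ s in Set.Icc (t - δ) (t + δ), (g t - η) * K s
          = (g t - η) * (2 * δ ^ ε / ε) := by
        rw [MeasureTheory.integral_const_mul, hKδ.2]
      have e2 : ∫ s in Set.Icc (t - δ) (t + δ), (g t - η) * K s
          ≤ ∫ s in Set.Icc (t - δ) (t + δ), g s * K s := by
        refine setIntegral_mono_on (hKδ.1.const_mul _) hGδ measurableSet_Icc fun s hs => ?_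
        have := hδball s hs
        have hgs : g t - η ≤ g s := by
          have := abs_lt.mp this
          linarith [this.1]
        exact mul_le_mul_of_nonneg_right hgs (hK0 s)
      have e3 : ∫ s in Set.Icc (t - δ) (t + δ), g s * K s
          ≤ ∫ s in Set.Icc (t - R) (t + R), g s * K s := by
        refine setIntegral_mono_set hGR ?_ (HasSubset.Subset.eventuallyLE hsubset)
        exact Filter.Eventually.of_forall fun s => mul_nonneg (hg0 s) (hK0 s)
      rw [htotal]
      linarith
    -- upper bound
    have hhigh : (∫ s, g s * K s) ≤ (g t + η) * (2 * δ ^ ε / ε)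
        + M * (2 * R ^ ε / ε - 2 * δ ^ ε / ε) := by
      have e1 : ∫ s in Set.Icc (t - δ) (t + δ), g s * K s
          ≤ ∫ s in Set.Icc (t - δ) (t + δ), (g t + η) * K s := by
        refine setIntegral_mono_on hGδ (hKδ.1.const_mul _) measurableSet_Icc fun s hs => ?_
        have := abs_lt.mp (hδball s hs)
        exact mul_le_mul_of_nonneg_right (by linarith [this.2]) (hK0 s)
      have e2 : ∫ s in Set.Icc (t - δ) (t + δ), (g t + η) * K s
          = (g t + η) * (2 * δ ^ ε / ε) := by
        rw [MeasureTheory.integral_const_mul, hKδ.2]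
      have e3 : ∫ s in Set.Icc (t - R) (t + R) \ Set.Icc (t - δ) (t + δ), g s * K s
          ≤ ∫ s in Set.Icc (t - R) (t + R) \ Set.Icc (t - δ) (t + δ), M * K s := by
        have hMK : IntegrableOn (fun s => M * K s) (Set.Icc (t - R) (t + R)) volume :=
          hKR.1.const_mul M
        refine setIntegral_mono_on (hGR.mono_set Set.diff_subset)
          (hMK.mono_set Set.diff_subset)
          (measurableSet_Icc.diff measurableSet_Icc) fun s hs => ?_
        exact mul_le_mul_of_nonneg_right (hgM s) (hK0 s)
      have e4 : ∫ s in Set.Icc (t - R) (t + R) \ Set.Icc (t - δ) (t + δ), g s * K s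
          = (∫ s in Set.Icc (t - R) (t + R), g s * K s)
            - ∫ s in Set.Icc (t - δ) (t + δ), g s * K s :=
        integral_diff measurableSet_Icc hGR hsubset
      have e5 : ∫ s in Set.Icc (t - R) (t + R) \ Set.Icc (t - δ) (t + δ), M * K s
          = M * (2 * R ^ ε / ε - 2 * δ ^ ε / ε) := by
        rw [integral_diff measurableSet_Icc (hKR.1.const_mul _) hsubset,
          MeasureTheory.integral_const_mul, MeasureTheory.integral_const_mul, hKR.2, hKδ.2]
        ring
      rw [htotal]
      linarith
    constructor
    · have := mul_le_mul_of_nonneg_left hlow (by linarith : (0:ℝ) ≤ ε / 2)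
      have heq : ε / 2 * ((g t - η) * (2 * δ ^ ε / ε)) = (g t - η) * δ ^ ε := by
        field_simp
      linarith
    · have := mul_le_mul_of_nonneg_left hhigh (by linarith : (0:ℝ) ≤ ε / 2)
      have heq : ε / 2 * ((g t + η) * (2 * δ ^ ε / ε)
          + M * (2 * R ^ ε / ε - 2 * δ ^ ε / ε))
          = (g t + η) * δ ^ ε + M * (R ^ ε - δ ^ ε) := by
        field_simp
      linarith
  -- convergence of the bounding quantities
  have hδlim : Tendsto (fun ε : ℝ => δ ^ ε) (nhds 0) (nhds 1) := by
    have := (Real.continuousAt_const_rpow (b := (0:ℝ)) hδpos.ne').tendsto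
    rwa [Real.rpow_zero] at this
  have hRlim : Tendsto (fun ε : ℝ => R ^ ε) (nhds 0) (nhds 1) := by
    have := (Real.continuousAt_const_rpow (b := (0:ℝ)) hR.ne').tendsto
    rwa [Real.rpow_zero] at this
  have hlolim : Tendsto (fun ε : ℝ => (g t - η) * δ ^ ε) (nhds 0) (nhds (g t - η)) := by
    simpa using hδlim.const_mul (g t - η)
  have hhilim : Tendsto (fun ε : ℝ => (g t + η) * δ ^ ε + M * (R ^ ε - δ ^ ε))
      (nhds 0) (nhds (g t + η)) := by
    have h1 := (hδlim.const_mul (g t + η)).add ((hRlim.sub hδlim).const_mul M)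
    simpa using h1
  have hev1 : ∀ᶠ ε in nhdsWithin (0:ℝ) (Set.Ioi 0), g t - 2 * η < (g t - η) * δ ^ ε :=
    (hlolim.mono_left nhdsWithin_le_nhds).eventually (eventually_gt_nhds (by linarith))
  have hev2 : ∀ᶠ ε in nhdsWithin (0:ℝ) (Set.Ioi 0),
      (g t + η) * δ ^ ε + M * (R ^ ε - δ ^ ε) < g t + 2 * η :=
    (hhilim.mono_left nhdsWithin_le_nhds).eventually (eventually_lt_nhds (by linarith))
  filter_upwards [hev1, hev2, self_mem_nhdsWithin] with ε h1 h2 hε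
  rw [Set.mem_Ioi] at hε
  obtain ⟨hb1, hb2⟩ := hbound ε hε
  rw [Real.dist_eq, abs_lt]
  constructor
  · have : g t - 2 * η < ε / 2 * ∫ s, g s * |s - t| ^ (-1 + ε) := lt_of_lt_of_le h1 hb1
    linarith
  · have : ε / 2 * (∫ s, g s * |s - t| ^ (-1 + ε)) < g t + 2 * η := lt_of_le_of_lt hb2 h2
    linarith


/-- Let `d ≥ 2`, let `L` be a convex body in `ℝ^d`, let `ξ ∈ S^{d-1}`,
and let `t` satisfy `min_{x ∈ L} ⟨x, ξ⟩ < t < max_{x ∈ L} ⟨x, ξ⟩`. Then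
`lim_{ε→0⁺} (ε/2) ∫_L |⟨x, ξ⟩ − t|^{−1+ε} dx = V_{d-1}(L ∩ {⟨x, ξ⟩ = t})`,
where the `(d-1)`-dimensional Lebesgue measure of the section is computed via the
isometric parametrization `y ↦ tξ + y` of the hyperplane `{⟨x,ξ⟩ = t}` by `ξ^⊥`. -/
theorem limit_eps_integral_section_volume
    (d : ℕ) (hd : 2 ≤ d)
    (L : Set (Euc d)) (hL : IsCompact L) (hLc : Convex ℝ L)
    (hLi : (interior L).Nonempty)
    (ξ : Euc d) (hξ : ‖ξ‖ = 1) (t : ℝ)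
    (h₁ : sInf ((fun x : Euc d => ⟪x, ξ⟫) '' L) < t)
    (h₂ : t < sSup ((fun x : Euc d => ⟪x, ξ⟫) '' L)) :
    Tendsto
      (fun ε : ℝ => ε / 2 * ∫ x in L, |⟪x, ξ⟫ - t| ^ (-1 + ε))
      (nhdsWithin 0 (Set.Ioi 0))
      (nhds ((volume {y : (ℝ ∙ ξ)ᗮ | t • ξ + (y : Euc d) ∈ L}).toReal)) := by
  obtain ⟨k, rfl⟩ : ∃ k, d = k + 1 := ⟨d - 1, by omega⟩
  have hLm : MeasurableSet L := hL.isClosed.measurableSet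
  have hLne : L.Nonempty := hLi.mono interior_subset
  have hcontproj : Continuous fun x : Euc (k+1) => ⟪x, ξ⟫ :=
    continuous_id.inner continuous_const
  have himg : IsCompact ((fun x : Euc (k+1) => ⟪x, ξ⟫) '' L) := hL.image hcontproj
  have himgne : ((fun x : Euc (k+1) => ⟪x, ξ⟫) '' L).Nonempty := hLne.image _
  obtain ⟨p, hpL, hpv⟩ := himg.sInf_mem himgne
  obtain ⟨q, hqL, hqv⟩ := himg.sSup_mem himgne
  have hpt : ⟪p, ξ⟫ < t := lt_of_eq_of_lt hpv h₁
  have hqt : t < ⟪q, ξ⟫ := lt_of_lt_of_eq h₂ hqv.symm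
  -- a bound on L
  obtain ⟨r0, hr0⟩ := hL.isBounded.subset_closedBall 0
  set RL : ℝ := max r0 0 with hRL
  have hRL0 : 0 ≤ RL := le_max_right _ _
  have hLball : L ⊆ closedBall (0 : Euc (k+1)) RL :=
    hr0.trans (closedBall_subset_closedBall (le_max_left _ _))
  have hnormL : ∀ x ∈ L, ‖x‖ ≤ RL := by
    intro x hx
    have := hLball hx
    rwa [mem_closedBall_zero_iff] at this
  -- section function
  set f : ℝ → ℝ≥0∞ :=
    fun s => volume {y : (ℝ ∙ ξ)ᗮ | s • ξ + (y : Euc (k+1)) ∈ L} with hfdef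
  set Mv : ℝ≥0∞ := volume (closedBall (0 : (ℝ ∙ ξ)ᗮ) RL) with hMv
  have hMvne : Mv ≠ ⊤ := measure_closedBall_lt_top.ne
  have hsecball : ∀ (s : ℝ) (y : (ℝ ∙ ξ)ᗮ), s • ξ + (y : Euc (k+1)) ∈ L →
      y ∈ closedBall (0 : (ℝ ∙ ξ)ᗮ) RL := by
    intro s y hy
    have hyperp : ⟪s • ξ, (y : Euc (k+1))⟫ = 0 := by
      rw [real_inner_smul_left]
      rw [y.2 ξ (Submodule.mem_span_singleton_self ξ), mul_zero]
    have hsq : ‖s • ξ + (y : Euc (k+1))‖ ^ 2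
        = ‖s • ξ‖ ^ 2 + 2 * ⟪s • ξ, (y : Euc (k+1))⟫ + ‖(y : Euc (k+1))‖ ^ 2 :=
      norm_add_sq_real _ _
    rw [hyperp] at hsq
    have h1 : ‖(y : Euc (k+1))‖ ≤ ‖s • ξ + (y : Euc (k+1))‖ := by
      nlinarith [norm_nonneg (s • ξ + (y : Euc (k+1))), norm_nonneg (y : Euc (k+1)),
        norm_nonneg (s • ξ)]
    have h2 : ‖s • ξ + (y : Euc (k+1))‖ ≤ RL := hnormL _ hy
    rw [mem_closedBall_zero_iff]
    calc ‖y‖ = ‖(y : Euc (k+1))‖ := rfl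
      _ ≤ RL := h1.trans h2
  have hbound : ∀ s : ℝ, f s ≤ Mv := by
    intro s
    exact measure_mono fun y hy => hsecball s y hy
  have hfne : ∀ s, f s ≠ ⊤ := fun s => ne_top_of_le_ne_top hMvne (hbound s)
  set g : ℝ → ℝ := fun s => (f s).toReal with hgdef
  set M : ℝ := Mv.toReal with hMdef
  have hg0 : ∀ s, 0 ≤ g s := fun s => ENNReal.toReal_nonneg
  have hgM : ∀ s, g s ≤ M := fun s => ENNReal.toReal_mono hMvne (hbound s)
  have hmeasf : Measurable f := measurable_secvol k ξ hξ L hLm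
  have hmeasg : Measurable g := hmeasf.ennreal_toReal
  set R : ℝ := RL + |t| + 1 with hRdef
  have hR : 0 < R := by positivity
  have hsupp : ∀ s : ℝ, R < |s - t| → g s = 0 := by
    intro s hs
    have hempty : {y : (ℝ ∙ ξ)ᗮ | s • ξ + (y : Euc (k+1)) ∈ L} = ∅ := by
      rw [Set.eq_empty_iff_forall_notMem]
      intro y hy
      have h1 : |⟪s • ξ + (y : Euc (k+1)), ξ⟫| ≤ RL := by
        calc |⟪s • ξ + (y : Euc (k+1)), ξ⟫| ≤ ‖s • ξ + (y : Euc (k+1))‖ * ‖ξ‖ :=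
              abs_real_inner_le_norm _ _
          _ = ‖s • ξ + (y : Euc (k+1))‖ := by rw [hξ, mul_one]
          _ ≤ RL := hnormL _ hy
      rw [proj_decomp k ξ hξ] at h1
      have h2 : |s - t| ≤ |s| + |t| := by
        calc |s - t| = |s + -t| := by rw [sub_eq_add_neg]
          _ ≤ |s| + |-t| := abs_add_le _ _
          _ = |s| + |t| := by rw [abs_neg]
      have h3 : R = RL + |t| + 1 := hRdef
      linarith
    show (f s).toReal = 0
    rw [hfdef]
    simp only [hempty, measure_empty, ENNReal.toReal_zero]
  have hcont : ContinuousAt g t :=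
    secvol_continuousAt k ξ hξ L hLc Mv hMvne hbound t p q hpL hqL hpt hqt
  have hdelta := delta_approx t R M hR ENNReal.toReal_nonneg g hmeasg hg0 hgM hsupp hcont
  -- identify the two integrals
  refine hdelta.congr' ?_
  filter_upwards [self_mem_nhdsWithin] with ε hε
  rw [Set.mem_Ioi] at hε
  have hkermeas : Measurable fun s : ℝ => ENNReal.ofReal (|s - t| ^ (-1 + ε)) := by
    apply Measurable.ennreal_ofReal
    exact measurable_abs_rpow (-1 + ε) t
  have step2 := lintegral_slice k ξ hξ L hLm
    (fun s => ENNReal.ofReal (|s - t| ^ (-1 + ε))) hkermeas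
  have step1 : ∫ x in L, |⟪x, ξ⟫ - t| ^ (-1 + ε)
      = (∫⁻ x in L, ENNReal.ofReal (|⟪x, ξ⟫ - t| ^ (-1 + ε))).toReal := by
    rw [integral_eq_lintegral_of_nonneg_ae
      (Filter.Eventually.of_forall fun x => Real.rpow_nonneg (abs_nonneg _) _)
      (((measurable_abs_rpow (-1 + ε) t).comp hcontproj.measurable).aestronglyMeasurable)]
  have step4 : ∫ s, g s * |s - t| ^ (-1 + ε)
      = (∫⁻ s, ENNReal.ofReal (g s * |s - t| ^ (-1 + ε))).toReal := by
    rw [integral_eq_lintegral_of_nonneg_ae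
      (Filter.Eventually.of_forall fun s =>
        mul_nonneg (hg0 s) (Real.rpow_nonneg (abs_nonneg _) _))
      ((hmeasg.mul (measurable_abs_rpow (-1 + ε) t)).aestronglyMeasurable)]
  have step3 : (∫⁻ s, ENNReal.ofReal (g s * |s - t| ^ (-1 + ε)))
      = ∫⁻ s, ENNReal.ofReal (|s - t| ^ (-1 + ε)) * f s := by
    refine lintegral_congr fun s => ?_
    rw [ENNReal.ofReal_mul (hg0 s), hgdef]
    rw [ENNReal.ofReal_toReal (hfne s)]
    ring
  rw [step4, step3, ← step2, ← step1]
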